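/- Suppose g, f : ℝ^d × I_z → ℝ are 2L-periodic and continuous in v, continuously differentiable in z, and bounded together with their z-derivatives, and suppose b is continuously differentiable in z with |b(s,z)| ≤ C_b and |∂_z b(s,z)| ≤ C_b. Then the map z ↦ Q^R(g,f)(v,z) is differentiable and the Leibniz rule ∂_z Q^R(g,f)(v,z) = Q^R(∂_z g, f)(v,z) + Q^R(g, ∂_z f)(v,z) + Q^R_{∂_z b}(g,f)(v,z) holds for every (v,z), where Q^R_{∂_z b} denotes the operator obtained from Q^R by replacing the angular factor b by ∂_z b. -/

import Mathlib

/- Setup (one-dimensional random space `d_z = 1`): velocity space `ℝ^d`,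
periodic cube `D_L`, random domain `I_z ⊂ ℝ` with probability density `w`,
sphere measure, truncated collision operators, and mixed Sobolev norms
(`z`-derivatives are classical derivatives `deriv`, velocity derivatives of
order `j` are measured through `iteratedFDeriv`). -/

noncomputable section
open MeasureTheory Metric Real Function
open scoped ENNReal RealInnerProductSpace

/-- Velocity space `ℝ^d`. -/
abbrev Vs (d : ℕ) := EuclideanSpace ℝ (Fin d)

/-- The periodic cell `D_L = [-L,L]^d`. -/
def cube (d : ℕ) (L : ℝ) : Set (Vs d) := {v | ∀ i, |v i| ≤ L}

/-- The (surface) measure on the unit sphere `S^{d-1}`. -/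
def sphMeas (d : ℕ) : Measure (sphere (0 : Vs d) 1) := (volume : Measure (Vs d)).toSphere

/-- Lebesgue measure restricted to the periodic cell `D_L`. -/
def μv (d : ℕ) (L : ℝ) : Measure (Vs d) := volume.restrict (cube d L)

/-- The probability measure `π(z)dz` on `I_z ⊂ ℝ` (density `w`, restricted to `Iz`). -/
def μz1 (Iz : Set ℝ) (w : ℝ → ℝ) : Measure ℝ :=
  (volume.withDensity fun z => ENNReal.ofReal (w z)).restrict Iz

/-- Product measure on `D_L × I_z`. -/
def μp (d : ℕ) (L : ℝ) (Iz : Set ℝ) (w : ℝ → ℝ) : Measure (Vs d × ℝ) :=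
  (μv d L).prod (μz1 Iz w)

/-- `2L`-periodicity in the velocity variable. -/
def PeriodicV {d : ℕ} (L : ℝ) (g : Vs d → ℝ → ℝ) : Prop :=
  ∀ (v : Vs d) (z : ℝ) (i : Fin d), g (v + EuclideanSpace.single i (2 * L)) z = g v z

/-- Truncated gain operator `Q^{R,+}(g,f)(v,z)`. -/
def QRp {d : ℕ} (R : ℝ) (Φ : ℝ → ℝ) (b : ℝ → ℝ → ℝ)
    (g f : Vs d → ℝ → ℝ) (v : Vs d) (z : ℝ) : ℝ :=
  ∫ q in closedBall (0 : Vs d) R,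
    (∫ σ, Φ ‖q‖ * b ⟪(σ : Vs d), ‖q‖⁻¹ • q⟫ z *
      g (v - (1 / 2 : ℝ) • q - (‖q‖ / 2) • (σ : Vs d)) z *
      f (v - (1 / 2 : ℝ) • q + (‖q‖ / 2) • (σ : Vs d)) z ∂(sphMeas d))

/-- Truncated loss operator `Q^{R,-}(g,f)(v,z)`. -/
def QRm {d : ℕ} (R : ℝ) (Φ : ℝ → ℝ) (b : ℝ → ℝ → ℝ)
    (g f : Vs d → ℝ → ℝ) (v : Vs d) (z : ℝ) : ℝ :=
  f v z * ∫ q in closedBall (0 : Vs d) R,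
    (∫ σ, Φ ‖q‖ * b ⟪(σ : Vs d), ‖q‖⁻¹ • q⟫ z * g (v - q) z ∂(sphMeas d))

/-- Full truncated collision operator `Q^R = Q^{R,+} - Q^{R,-}`. -/
def QRfull {d : ℕ} (R : ℝ) (Φ : ℝ → ℝ) (b : ℝ → ℝ → ℝ)
    (g f : Vs d → ℝ → ℝ) (v : Vs d) (z : ℝ) : ℝ :=
  QRp R Φ b g f v z - QRm R Φ b g f v z

/-- `l`-th derivative in the random variable `z`. -/
def zder {d : ℕ} (l : ℕ) (f : Vs d → ℝ → ℝ) (v : Vs d) (z : ℝ) : ℝ := deriv^[l] (f v) z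

/-- The mixed Sobolev norm `‖f‖_{H^k_v H^r_z}` (its square is the sum over `j ≤ k`,
`l ≤ r` of the squared `L²_{v,z}` norms of `∂_v^j ∂_z^l f`). -/
def normHkvHrz (d : ℕ) (L : ℝ) (Iz : Set ℝ) (w : ℝ → ℝ) (k r : ℕ)
    (f : Vs d → ℝ → ℝ) : ℝ≥0∞ :=
  (∑ j ∈ Finset.range (k + 1), ∑ l ∈ Finset.range (r + 1),
    ∫⁻ x, (‖iteratedFDeriv ℝ j (fun v => zder l f v x.2) x.1‖₊ : ℝ≥0∞) ^ 2
      ∂(μp d L Iz w)) ^ (1 / 2 : ℝ)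

/-- The norm `‖g‖_{L¹_v H^r_z} = ∫_{D_L} ( Σ_{l ≤ r} ∫ |∂_z^l g|² dπ )^{1/2} dv`. -/
def normL1vHrz (d : ℕ) (L : ℝ) (Iz : Set ℝ) (w : ℝ → ℝ) (r : ℕ)
    (g : Vs d → ℝ → ℝ) : ℝ≥0∞ :=
  ∫⁻ v, (∑ l ∈ Finset.range (r + 1),
    ∫⁻ z, (‖zder l g v z‖₊ : ℝ≥0∞) ^ 2 ∂(μz1 Iz w)) ^ (1 / 2 : ℝ) ∂(μv d L)

/-- The norm `‖h‖_{H^r_z}` of a function of the random variable alone. -/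
def normHrz (Iz : Set ℝ) (w : ℝ → ℝ) (r : ℕ) (h : ℝ → ℝ) : ℝ≥0∞ :=
  (∑ l ∈ Finset.range (r + 1),
    ∫⁻ z, (‖deriv^[l] h z‖₊ : ℝ≥0∞) ^ 2 ∂(μz1 Iz w)) ^ (1 / 2 : ℝ)

/-- The norm `‖f⁻‖_{L²_v H¹_z}` of the negative part:
`‖f⁻‖² = ‖f⁻‖²_{L²_{v,z}} + ‖1_{{f ≤ 0}} ∂_z f‖²_{L²_{v,z}}`. -/
def normNegL2vH1z (d : ℕ) (L : ℝ) (Iz : Set ℝ) (w : ℝ → ℝ)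
    (f : Vs d → ℝ → ℝ) : ℝ≥0∞ :=
  ((∫⁻ x, (‖max (-(f x.1 x.2)) 0‖₊ : ℝ≥0∞) ^ 2 ∂(μp d L Iz w)) +
    ∫⁻ x, (if f x.1 x.2 ≤ 0 then (‖deriv (f x.1) x.2‖₊ : ℝ≥0∞) ^ 2 else 0)
      ∂(μp d L Iz w)) ^ (1 / 2 : ℝ)

lemma sphMeas_finite (d : ℕ) : IsFiniteMeasure (sphMeas d) := by
  unfold sphMeas; infer_instance

lemma norm_preimage_null {d : ℕ} (hd : 1 ≤ d) {N : Set ℝ} (hNm : MeasurableSet N)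
    (hN : volume (N ∩ Set.Ioi (0:ℝ)) = 0) :
    (volume : Measure (Vs d)) {q | ‖q‖ ∈ N} = 0 := by
  haveI : Nontrivial (Vs d) := by
    apply Module.nontrivial_of_finrank_pos (R := ℝ)
    rw [finrank_euclideanSpace_fin]; omega
  set μ : Measure (Vs d) := volume with hμ
  set A : Set ({(0:Vs d)}ᶜ : Set (Vs d)) := {x | ‖(x : Vs d)‖ ∈ N} with hA
  have hS : MeasurableSet {r : Set.Ioi (0:ℝ) | (r : ℝ) ∈ N} :=
    measurable_subtype_coe hNm
  have hAeq : A = (homeomorphUnitSphereProd (Vs d)) ⁻¹'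
      (Set.univ ×ˢ {r : Set.Ioi (0:ℝ) | (r : ℝ) ∈ N}) := by
    ext x
    simp [hA, Set.mem_prod]
  have himgS : (volume : Measure ℝ).comap Subtype.val {r : Set.Ioi (0:ℝ) | (r : ℝ) ∈ N} = 0 := by
    rw [comap_subtype_coe_apply measurableSet_Ioi]
    refine measure_mono_null ?_ hN
    rintro y ⟨⟨r, hr⟩, hrN, rfl⟩
    exact ⟨hrN, hr⟩
  have hprodS : (Measure.volumeIoiPow (Module.finrank ℝ (Vs d) - 1))
      {r : Set.Ioi (0:ℝ) | (r : ℝ) ∈ N} = 0 := by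
    rw [Measure.volumeIoiPow, withDensity_apply _ hS]
    exact setLIntegral_measure_zero _ _ himgS
  have hcomap : (μ.comap Subtype.val) A = 0 := by
    rw [hAeq, (μ.measurePreserving_homeomorphUnitSphereProd).measure_preimage
      (MeasurableSet.univ.prod hS).nullMeasurableSet,
      Measure.prod_prod, hprodS, mul_zero]
  have himg : μ (Subtype.val '' A) = 0 := by
    rw [← comap_subtype_coe_apply
      (measurableSet_singleton (0:Vs d)).compl μ A]
    exact hcomap
  have hsub : {q : Vs d | ‖q‖ ∈ N} ⊆ {0} ∪ (Subtype.val '' A) := by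
    intro q hq
    by_cases h : q = 0
    · exact Or.inl (by simp [h])
    · exact Or.inr ⟨⟨q, h⟩, hq, rfl⟩
  exact measure_mono_null hsub (measure_union_null (measure_singleton _) himg)

lemma ae_Phi_bound {d : ℕ} (hd : 1 ≤ d) (R : ℝ) (Φ : ℝ → ℝ) (hΦm : Measurable Φ) (MΦ : ℝ)
    (hMΦ : ∀ᵐ s ∂(volume.restrict (Set.Icc (0:ℝ) R)), Φ s ≤ MΦ) :
    ∀ᵐ q ∂((volume : Measure (Vs d)).restrict (closedBall 0 R)), Φ ‖q‖ ≤ MΦ := by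
  have hbadm : MeasurableSet {s : ℝ | ¬ Φ s ≤ MΦ} :=
    (measurableSet_le hΦm measurable_const).compl
  have hN0 : volume ({s : ℝ | ¬ Φ s ≤ MΦ} ∩ Set.Icc 0 R) = 0 := by
    have := hMΦ
    rw [MeasureTheory.ae_iff, Measure.restrict_apply hbadm] at this
    exact this
  have hball : (volume : Measure (Vs d))
      {q | ‖q‖ ∈ {s : ℝ | ¬ Φ s ≤ MΦ} ∩ Set.Icc 0 R} = 0 :=
    norm_preimage_null hd (hbadm.inter measurableSet_Icc)
      (measure_mono_null Set.inter_subset_left hN0)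
  rw [MeasureTheory.ae_restrict_iff' measurableSet_closedBall]
  rw [MeasureTheory.ae_iff]
  refine measure_mono_null ?_ hball
  intro q hq
  simp only [Set.mem_setOf_eq, not_forall, Classical.not_imp] at hq ⊢
  exact ⟨hq.2, norm_nonneg q, (mem_closedBall_zero_iff).1 hq.1⟩

lemma sph_integrable {d : ℕ} (B : ℝ) (h : sphere (0:Vs d) 1 → ℝ)
    (hm : Measurable h) (hb : ∀ σ, |h σ| ≤ B) : Integrable h (sphMeas d) := by
  haveI := sphMeas_finite d
  exact (integrable_const B).mono' hm.aestronglyMeasurable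
    (Filter.Eventually.of_forall fun σ => by simpa [Real.norm_eq_abs] using hb σ)

lemma abs_mul4_le {x a c e Ca Cc Ce : ℝ} (hx : 0 ≤ x) (ha : |a| ≤ Ca) (hc : |c| ≤ Cc)
    (he : |e| ≤ Ce) : |x * a * c * e| ≤ x * (Ca * Cc * Ce) := by
  have h0a := (abs_nonneg a).trans ha
  have h0c := (abs_nonneg c).trans hc
  have h0e := (abs_nonneg e).trans he
  have h : |a| * |c| * |e| ≤ Ca * Cc * Ce := by
    apply mul_le_mul (mul_le_mul ha hc (abs_nonneg _) h0a) he (abs_nonneg _)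
    exact mul_nonneg h0a h0c
  calc |x * a * c * e| = x * (|a| * |c| * |e|) := by
        rw [abs_mul, abs_mul, abs_mul, abs_of_nonneg hx]; ring
    _ ≤ x * (Ca * Cc * Ce) := mul_le_mul_of_nonneg_left h hx

lemma abs_mul3_le {x a c Ca Cc : ℝ} (hx : 0 ≤ x) (ha : |a| ≤ Ca) (hc : |c| ≤ Cc) :
    |x * a * c| ≤ x * (Ca * Cc) := by
  have h0a := (abs_nonneg a).trans ha
  have h : |a| * |c| ≤ Ca * Cc := mul_le_mul ha hc (abs_nonneg _) h0a
  calc |x * a * c| = x * (|a| * |c|) := by rw [abs_mul, abs_mul, abs_of_nonneg hx]; ring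
    _ ≤ x * (Ca * Cc) := mul_le_mul_of_nonneg_left h hx

lemma double_param_integrable {d : ℕ} (R : ℝ) (w : Vs d → ℝ) (W C : ℝ)
    (hwae : ∀ᵐ q ∂((volume : Measure (Vs d)).restrict (closedBall 0 R)), w q ≤ W)
    (hC : 0 ≤ C)
    (H : Vs d → sphere (0:Vs d) 1 → ℝ → ℝ) (z : ℝ)
    (hm : Measurable (fun p : Vs d × sphere (0:Vs d) 1 => H p.1 p.2 z))
    (hb : ∀ q σ, |H q σ z| ≤ w q * C) :
    Integrable (fun q => ∫ σ, H q σ z ∂(sphMeas d))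
      ((volume : Measure (Vs d)).restrict (closedBall 0 R)) := by
  haveI := sphMeas_finite d
  haveI : IsFiniteMeasure ((volume : Measure (Vs d)).restrict (closedBall 0 R)) :=
    ⟨by rw [Measure.restrict_apply_univ]; exact measure_closedBall_lt_top⟩
  set S : ℝ := (sphMeas d Set.univ).toReal with hSdef
  have hS0 : 0 ≤ S := ENNReal.toReal_nonneg
  have hmeas : AEStronglyMeasurable (fun q => ∫ σ, H q σ z ∂(sphMeas d))
      ((volume : Measure (Vs d)).restrict (closedBall 0 R)) :=
    (hm.stronglyMeasurable.integral_prod_right').aestronglyMeasurable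
  refine (integrable_const (W * C * S)).mono' hmeas ?_
  filter_upwards [hwae] with q hq
  have h1 : ‖∫ σ, H q σ z ∂(sphMeas d)‖ ≤ (w q * C) * S :=
    norm_integral_le_of_norm_le_const
      (Filter.Eventually.of_forall fun σ => by simpa [Real.norm_eq_abs] using hb q σ)
  refine h1.trans ?_
  exact mul_le_mul_of_nonneg_right (mul_le_mul_of_nonneg_right hq hC) hS0

lemma double_param_deriv {d : ℕ} (R : ℝ) (w : Vs d → ℝ) (W C : ℝ)
    (hw0 : ∀ q, 0 ≤ w q)
    (hwae : ∀ᵐ q ∂((volume : Measure (Vs d)).restrict (closedBall 0 R)), w q ≤ W)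
    (hC : 0 ≤ C)
    (H H' : Vs d → sphere (0:Vs d) 1 → ℝ → ℝ)
    (hm : ∀ t, Measurable (fun p : Vs d × sphere (0:Vs d) 1 => H p.1 p.2 t))
    (hm' : ∀ t, Measurable (fun p : Vs d × sphere (0:Vs d) 1 => H' p.1 p.2 t))
    (hb : ∀ q σ t, |H q σ t| ≤ w q * C)
    (hb' : ∀ q σ t, |H' q σ t| ≤ w q * C)
    (hder : ∀ q σ t, HasDerivAt (fun u => H q σ u) (H' q σ t) t) (z : ℝ) :
    HasDerivAt (fun t => ∫ q in closedBall (0:Vs d) R, ∫ σ, H q σ t ∂(sphMeas d))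
      (∫ q in closedBall (0:Vs d) R, ∫ σ, H' q σ z ∂(sphMeas d)) z := by
  haveI := sphMeas_finite d
  haveI : IsFiniteMeasure ((volume : Measure (Vs d)).restrict (closedBall 0 R)) :=
    ⟨by rw [Measure.restrict_apply_univ]; exact measure_closedBall_lt_top⟩
  set S : ℝ := (sphMeas d Set.univ).toReal with hSdef
  have hS0 : 0 ≤ S := ENNReal.toReal_nonneg
  -- inner derivative
  have hinner : ∀ q t, HasDerivAt (fun u => ∫ σ, H q σ u ∂(sphMeas d))
      (∫ σ, H' q σ t ∂(sphMeas d)) t := by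
    intro q t
    refine (hasDerivAt_integral_of_dominated_loc_of_deriv_le (F := fun u σ => H q σ u)
      (F' := fun u σ => H' q σ u) (bound := fun _ => w q * C) (Metric.ball_mem_nhds _ one_pos) ?_ ?_ ?_ ?_ ?_ ?_).2
    · exact Filter.Eventually.of_forall fun u =>
        ((hm u).comp measurable_prodMk_left).aestronglyMeasurable
    · exact sph_integrable _ _ ((hm t).comp measurable_prodMk_left) (fun σ => hb q σ t)
    · exact ((hm' t).comp measurable_prodMk_left).aestronglyMeasurable
    · exact Filter.Eventually.of_forall fun σ u _ => by
        simpa [Real.norm_eq_abs] using hb' q σ u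
    · exact integrable_const _
    · exact Filter.Eventually.of_forall fun σ u _ => hder q σ u
  -- outer derivative
  refine (hasDerivAt_integral_of_dominated_loc_of_deriv_le
    (F := fun t q => ∫ σ, H q σ t ∂(sphMeas d))
    (F' := fun t q => ∫ σ, H' q σ t ∂(sphMeas d))
    (bound := fun _ => W * C * S) (Metric.ball_mem_nhds _ one_pos) ?_ ?_ ?_ ?_ ?_ ?_).2
  · exact Filter.Eventually.of_forall fun t =>
      ((hm t).stronglyMeasurable.integral_prod_right').aestronglyMeasurable
  · exact double_param_integrable R w W C hwae hC H z (hm z) (fun q σ => hb q σ z)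
  · exact ((hm' z).stronglyMeasurable.integral_prod_right').aestronglyMeasurable
  · filter_upwards [hwae] with q hq
    intro t _
    have h1 : ‖∫ σ, H' q σ t ∂(sphMeas d)‖ ≤ (w q * C) * S :=
      norm_integral_le_of_norm_le_const
        (Filter.Eventually.of_forall fun σ => by simpa [Real.norm_eq_abs] using hb' q σ t)
    exact h1.trans (mul_le_mul_of_nonneg_right (mul_le_mul_of_nonneg_right hq hC) hS0)
  · exact integrable_const _
  · exact Filter.Eventually.of_forall fun q t _ => hinner q t

lemma double_split2 {d : ℕ} (R : ℝ) (w : Vs d → ℝ) (W CA CB : ℝ)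
    (hwae : ∀ᵐ q ∂((volume : Measure (Vs d)).restrict (closedBall 0 R)), w q ≤ W)
    (hCA : 0 ≤ CA) (hCB : 0 ≤ CB)
    (A B : Vs d → sphere (0:Vs d) 1 → ℝ)
    (mA : Measurable (fun p : Vs d × sphere (0:Vs d) 1 => A p.1 p.2))
    (mB : Measurable (fun p : Vs d × sphere (0:Vs d) 1 => B p.1 p.2))
    (bA : ∀ q σ, |A q σ| ≤ w q * CA) (bB : ∀ q σ, |B q σ| ≤ w q * CB) :
    (∫ q in closedBall (0:Vs d) R, ∫ σ, (A q σ + B q σ) ∂(sphMeas d))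
      = (∫ q in closedBall (0:Vs d) R, ∫ σ, A q σ ∂(sphMeas d))
      + (∫ q in closedBall (0:Vs d) R, ∫ σ, B q σ ∂(sphMeas d)) := by
  have sA : ∀ q, Integrable (fun σ => A q σ) (sphMeas d) := fun q =>
    sph_integrable _ _ (mA.comp measurable_prodMk_left) (bA q)
  have sB : ∀ q, Integrable (fun σ => B q σ) (sphMeas d) := fun q =>
    sph_integrable _ _ (mB.comp measurable_prodMk_left) (bB q)
  have iA : Integrable (fun q => ∫ σ, A q σ ∂(sphMeas d))
      ((volume : Measure (Vs d)).restrict (closedBall 0 R)) :=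
    double_param_integrable R w W CA hwae hCA (fun q σ _ => A q σ) 0 mA (fun q σ => bA q σ)
  have iB : Integrable (fun q => ∫ σ, B q σ ∂(sphMeas d))
      ((volume : Measure (Vs d)).restrict (closedBall 0 R)) :=
    double_param_integrable R w W CB hwae hCB (fun q σ _ => B q σ) 0 mB (fun q σ => bB q σ)
  have e1 : ∀ q : Vs d, (∫ σ, (A q σ + B q σ) ∂(sphMeas d))
      = (∫ σ, A q σ ∂(sphMeas d)) + (∫ σ, B q σ ∂(sphMeas d)) := fun q =>
    integral_add (sA q) (sB q)
  have e2 : (∫ q in closedBall (0:Vs d) R,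
        ((∫ σ, A q σ ∂(sphMeas d)) + (∫ σ, B q σ ∂(sphMeas d))))
      = (∫ q in closedBall (0:Vs d) R, ∫ σ, A q σ ∂(sphMeas d))
      + (∫ q in closedBall (0:Vs d) R, ∫ σ, B q σ ∂(sphMeas d)) := integral_add iA iB
  rw [← e2]
  exact integral_congr_ae (Filter.Eventually.of_forall e1)

lemma double_split3 {d : ℕ} (R : ℝ) (w : Vs d → ℝ) (W CA CB CC : ℝ)
    (hwae : ∀ᵐ q ∂((volume : Measure (Vs d)).restrict (closedBall 0 R)), w q ≤ W)
    (hCA : 0 ≤ CA) (hCB : 0 ≤ CB) (hCC : 0 ≤ CC)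
    (A B C : Vs d → sphere (0:Vs d) 1 → ℝ)
    (mA : Measurable (fun p : Vs d × sphere (0:Vs d) 1 => A p.1 p.2))
    (mB : Measurable (fun p : Vs d × sphere (0:Vs d) 1 => B p.1 p.2))
    (mC : Measurable (fun p : Vs d × sphere (0:Vs d) 1 => C p.1 p.2))
    (bA : ∀ q σ, |A q σ| ≤ w q * CA) (bB : ∀ q σ, |B q σ| ≤ w q * CB)
    (bC : ∀ q σ, |C q σ| ≤ w q * CC) :
    (∫ q in closedBall (0:Vs d) R, ∫ σ, (A q σ + B q σ + C q σ) ∂(sphMeas d))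
      = (∫ q in closedBall (0:Vs d) R, ∫ σ, A q σ ∂(sphMeas d))
      + (∫ q in closedBall (0:Vs d) R, ∫ σ, B q σ ∂(sphMeas d))
      + (∫ q in closedBall (0:Vs d) R, ∫ σ, C q σ ∂(sphMeas d)) := by
  have sA : ∀ q, Integrable (fun σ => A q σ) (sphMeas d) := fun q =>
    sph_integrable _ _ (mA.comp measurable_prodMk_left) (bA q)
  have sB : ∀ q, Integrable (fun σ => B q σ) (sphMeas d) := fun q =>
    sph_integrable _ _ (mB.comp measurable_prodMk_left) (bB q)
  have sC : ∀ q, Integrable (fun σ => C q σ) (sphMeas d) := fun q =>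
    sph_integrable _ _ (mC.comp measurable_prodMk_left) (bC q)
  have iA : Integrable (fun q => ∫ σ, A q σ ∂(sphMeas d))
      ((volume : Measure (Vs d)).restrict (closedBall 0 R)) :=
    double_param_integrable R w W CA hwae hCA (fun q σ _ => A q σ) 0 mA (fun q σ => bA q σ)
  have iB : Integrable (fun q => ∫ σ, B q σ ∂(sphMeas d))
      ((volume : Measure (Vs d)).restrict (closedBall 0 R)) :=
    double_param_integrable R w W CB hwae hCB (fun q σ _ => B q σ) 0 mB (fun q σ => bB q σ)
  have iC : Integrable (fun q => ∫ σ, C q σ ∂(sphMeas d))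
      ((volume : Measure (Vs d)).restrict (closedBall 0 R)) :=
    double_param_integrable R w W CC hwae hCC (fun q σ _ => C q σ) 0 mC (fun q σ => bC q σ)
  have e1 : ∀ q : Vs d, (∫ σ, (A q σ + B q σ + C q σ) ∂(sphMeas d))
      = (∫ σ, A q σ ∂(sphMeas d)) + (∫ σ, B q σ ∂(sphMeas d)) + (∫ σ, C q σ ∂(sphMeas d)) := by
    intro q
    have sAB : Integrable (fun σ => A q σ + B q σ) (sphMeas d) := (sA q).add (sB q)
    have h1 : (∫ σ, (A q σ + B q σ + C q σ) ∂(sphMeas d))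
        = (∫ σ, (A q σ + B q σ) ∂(sphMeas d)) + ∫ σ, C q σ ∂(sphMeas d) :=
      integral_add sAB (sC q)
    have h2 : (∫ σ, (A q σ + B q σ) ∂(sphMeas d))
        = (∫ σ, A q σ ∂(sphMeas d)) + ∫ σ, B q σ ∂(sphMeas d) := integral_add (sA q) (sB q)
    rw [h1, h2]
  have iAB : Integrable (fun q => (∫ σ, A q σ ∂(sphMeas d)) + (∫ σ, B q σ ∂(sphMeas d)))
      ((volume : Measure (Vs d)).restrict (closedBall 0 R)) := iA.add iB
  have e2 : (∫ q in closedBall (0:Vs d) R,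
        ((∫ σ, A q σ ∂(sphMeas d)) + (∫ σ, B q σ ∂(sphMeas d)) + (∫ σ, C q σ ∂(sphMeas d))))
      = (∫ q in closedBall (0:Vs d) R,
          ((∫ σ, A q σ ∂(sphMeas d)) + (∫ σ, B q σ ∂(sphMeas d))))
        + (∫ q in closedBall (0:Vs d) R, ∫ σ, C q σ ∂(sphMeas d)) := integral_add iAB iC
  have e3 : (∫ q in closedBall (0:Vs d) R,
        ((∫ σ, A q σ ∂(sphMeas d)) + (∫ σ, B q σ ∂(sphMeas d))))
      = (∫ q in closedBall (0:Vs d) R, ∫ σ, A q σ ∂(sphMeas d))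
      + (∫ q in closedBall (0:Vs d) R, ∫ σ, B q σ ∂(sphMeas d)) := integral_add iA iB
  rw [integral_congr_ae (Filter.Eventually.of_forall e1), e2, e3]

set_option maxHeartbeats 2000000 in
/-- Leibniz rule in the random variable:
`∂_z Q^R(g,f) = Q^R(∂_z g, f) + Q^R(g, ∂_z f) + Q^R_{∂_z b}(g,f)` pointwise, where
`Q^R_{∂_z b}` is obtained from `Q^R` by replacing the angular factor `b` by `∂_z b`. -/
theorem collision_z_Leibniz_rule
    (d : ℕ) (hd : 2 ≤ d) (L R : ℝ) (hR : 0 < R) (hRL : R ≤ L)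
    (Iz : Set ℝ)
    (Φ : ℝ → ℝ) (hΦm : Measurable Φ) (hΦ0 : ∀ s, 0 ≤ Φ s)
    (MΦ : ℝ) (hMΦ : ∀ᵐ s ∂(volume.restrict (Set.Icc (0 : ℝ) R)), Φ s ≤ MΦ)
    (b bz : ℝ → ℝ → ℝ)
    (hbc : Continuous (uncurry b)) (hbzc : Continuous (uncurry bz))
    (hbd : ∀ s z, HasDerivAt (b s) (bz s z) z)
    (hb0 : ∀ s z, z ∈ Iz → 0 < b s z)
    (Cb : ℝ) (hbB : ∀ s z, |b s z| ≤ Cb ∧ |bz s z| ≤ Cb)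
    (g f gz fz : Vs d → ℝ → ℝ)
    (hgc : Continuous (uncurry g)) (hfc : Continuous (uncurry f))
    (hgzc : Continuous (uncurry gz)) (hfzc : Continuous (uncurry fz))
    (hgd : ∀ (v : Vs d) (z : ℝ), HasDerivAt (g v) (gz v z) z)
    (hfd : ∀ (v : Vs d) (z : ℝ), HasDerivAt (f v) (fz v z) z)
    (M : ℝ)
    (hMb : ∀ (v : Vs d) (z : ℝ),
      |g v z| ≤ M ∧ |gz v z| ≤ M ∧ |f v z| ≤ M ∧ |fz v z| ≤ M)
    (hgper : PeriodicV L g) (hfper : PeriodicV L f) :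
    ∀ (v : Vs d) (z : ℝ),
      HasDerivAt (fun t => QRfull R Φ b g f v t)
        (QRfull R Φ b gz f v z + QRfull R Φ b g fz v z +
          QRfull R Φ bz g f v z) z := by
  intro v z
  simp only [QRfull, QRp, QRm]
  haveI := sphMeas_finite d
  have hd1 : (1:ℕ) ≤ d := by omega
  have hCb : (0:ℝ) ≤ Cb := (abs_nonneg _).trans (hbB 0 0).1
  have hM : (0:ℝ) ≤ M := (abs_nonneg _).trans (hMb v z).1
  have hwae := ae_Phi_bound (d := d) hd1 R Φ hΦm MΦ hMΦ
  have hw0 : ∀ q : Vs d, 0 ≤ Φ ‖q‖ := fun q => hΦ0 _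
  have hgB : ∀ (x : Vs d) (u : ℝ), |g x u| ≤ M := fun x u => (hMb x u).1
  have hgzB : ∀ (x : Vs d) (u : ℝ), |gz x u| ≤ M := fun x u => (hMb x u).2.1
  have hfB : ∀ (x : Vs d) (u : ℝ), |f x u| ≤ M := fun x u => (hMb x u).2.2.1
  have hfzB : ∀ (x : Vs d) (u : ℝ), |fz x u| ≤ M := fun x u => (hMb x u).2.2.2
  have hb1 : ∀ (s u : ℝ), |b s u| ≤ Cb := fun s u => (hbB s u).1
  have hb2 : ∀ (s u : ℝ), |bz s u| ≤ Cb := fun s u => (hbB s u).2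
  -- measurability building blocks
  have mΦ : Measurable (fun p : Vs d × sphere (0:Vs d) 1 => Φ ‖p.1‖) :=
    hΦm.comp (measurable_norm.comp measurable_fst)
  have mS : Measurable (fun p : Vs d × sphere (0:Vs d) 1 => ⟪(p.2 : Vs d), ‖p.1‖⁻¹ • p.1⟫) :=
    Measurable.inner (continuous_subtype_val.comp continuous_snd).measurable
      ((measurable_norm.comp measurable_fst).inv.smul measurable_fst)
  have cVm : Continuous (fun p : Vs d × sphere (0:Vs d) 1 => (v - (1 / 2 : ℝ) • p.1 - (‖p.1‖ / 2) • (p.2 : Vs d))) := by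
    fun_prop
  have cVp : Continuous (fun p : Vs d × sphere (0:Vs d) 1 => (v - (1 / 2 : ℝ) • p.1 + (‖p.1‖ / 2) • (p.2 : Vs d))) := by
    fun_prop
  have cVq : Continuous (fun p : Vs d × sphere (0:Vs d) 1 => v - p.1) := by fun_prop
  have mB : ∀ (β : ℝ → ℝ → ℝ), Continuous (uncurry β) → ∀ t : ℝ,
      Measurable (fun p : Vs d × sphere (0:Vs d) 1 => β ⟪(p.2 : Vs d), ‖p.1‖⁻¹ • p.1⟫ t) :=
    fun β hβ t =>
      ((hβ.comp (continuous_id.prodMk continuous_const)).measurable).comp mS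
  have mP : ∀ (β : ℝ → ℝ → ℝ) (G F : Vs d → ℝ → ℝ), Continuous (uncurry β) → Continuous (uncurry G) →
      Continuous (uncurry F) → ∀ t : ℝ,
      Measurable (fun p : Vs d × sphere (0:Vs d) 1 =>
        Φ ‖p.1‖ * β ⟪(p.2 : Vs d), ‖p.1‖⁻¹ • p.1⟫ t * G (v - (1 / 2 : ℝ) • p.1 - (‖p.1‖ / 2) • (p.2 : Vs d)) t * F (v - (1 / 2 : ℝ) • p.1 + (‖p.1‖ / 2) • (p.2 : Vs d)) t) :=
    fun β G F hβ hG hF t =>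
      ((mΦ.mul (mB β hβ t)).mul
          ((hG.comp (cVm.prodMk continuous_const)).measurable)).mul
        ((hF.comp (cVp.prodMk continuous_const)).measurable)
  have mM : ∀ (β : ℝ → ℝ → ℝ) (G : Vs d → ℝ → ℝ), Continuous (uncurry β) → Continuous (uncurry G) → ∀ t : ℝ,
      Measurable (fun p : Vs d × sphere (0:Vs d) 1 =>
        Φ ‖p.1‖ * β ⟪(p.2 : Vs d), ‖p.1‖⁻¹ • p.1⟫ t * G (v - p.1) t) :=
    fun β G hβ hG t =>
      (mΦ.mul (mB β hβ t)).mul ((hG.comp (cVq.prodMk continuous_const)).measurable)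
  -- bounds
  have bP : ∀ (β : ℝ → ℝ → ℝ) (G F : Vs d → ℝ → ℝ), (∀ s u, |β s u| ≤ Cb) → (∀ x u, |G x u| ≤ M) →
      (∀ x u, |F x u| ≤ M) → ∀ (q : Vs d) (σ : sphere (0:Vs d) 1) (t : ℝ),
      |Φ ‖q‖ * β ⟪(σ : Vs d), ‖q‖⁻¹ • q⟫ t * G (v - (1 / 2 : ℝ) • q - (‖q‖ / 2) • (σ : Vs d)) t * F (v - (1 / 2 : ℝ) • q + (‖q‖ / 2) • (σ : Vs d)) t| ≤ Φ ‖q‖ * (Cb * M * M) :=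
    fun β G F hβ hG hF q σ t => abs_mul4_le (hΦ0 _) (hβ _ _) (hG _ _) (hF _ _)
  have bM : ∀ (β : ℝ → ℝ → ℝ) (G : Vs d → ℝ → ℝ), (∀ s u, |β s u| ≤ Cb) → (∀ x u, |G x u| ≤ M) →
      ∀ (q : Vs d) (σ : sphere (0:Vs d) 1) (t : ℝ),
      |Φ ‖q‖ * β ⟪(σ : Vs d), ‖q‖⁻¹ • q⟫ t * G (v - q) t| ≤ Φ ‖q‖ * (Cb * M) :=
    fun β G hβ hG q σ t => abs_mul3_le (hΦ0 _) (hβ _ _) (hG _ _)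
  have hCMM : (0:ℝ) ≤ Cb * M * M := by positivity
  have hCM : (0:ℝ) ≤ Cb * M := by positivity
  have liftP : ∀ (q : Vs d) (y : ℝ), |y| ≤ Φ ‖q‖ * (Cb * M * M) →
      |y| ≤ Φ ‖q‖ * (3 * (Cb * M * M)) :=
    fun q y h => h.trans (by nlinarith [mul_nonneg (hΦ0 ‖q‖) hCMM])
  have liftM : ∀ (q : Vs d) (y : ℝ), |y| ≤ Φ ‖q‖ * (Cb * M) →
      |y| ≤ Φ ‖q‖ * (2 * (Cb * M)) :=
    fun q y h => h.trans (by nlinarith [mul_nonneg (hΦ0 ‖q‖) hCM])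
  -- pointwise derivatives
  have derP : ∀ (q : Vs d) (σ : sphere (0:Vs d) 1) (t : ℝ),
      HasDerivAt (fun u => Φ ‖q‖ * b ⟪(σ : Vs d), ‖q‖⁻¹ • q⟫ u * g (v - (1 / 2 : ℝ) • q - (‖q‖ / 2) • (σ : Vs d)) u * f (v - (1 / 2 : ℝ) • q + (‖q‖ / 2) • (σ : Vs d)) u)
        (Φ ‖q‖ * bz ⟪(σ : Vs d), ‖q‖⁻¹ • q⟫ t * g (v - (1 / 2 : ℝ) • q - (‖q‖ / 2) • (σ : Vs d)) t * f (v - (1 / 2 : ℝ) • q + (‖q‖ / 2) • (σ : Vs d)) t + Φ ‖q‖ * b ⟪(σ : Vs d), ‖q‖⁻¹ • q⟫ t * gz (v - (1 / 2 : ℝ) • q - (‖q‖ / 2) • (σ : Vs d)) t * f (v - (1 / 2 : ℝ) • q + (‖q‖ / 2) • (σ : Vs d)) t + Φ ‖q‖ * b ⟪(σ : Vs d), ‖q‖⁻¹ • q⟫ t * g (v - (1 / 2 : ℝ) • q - (‖q‖ / 2) • (σ : Vs d)) t * fz (v - (1 / 2 : ℝ) • q + (‖q‖ / 2) • (σ :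 Vs d)) t) t := by
    intro q σ t
    have h := (((hasDerivAt_const t (Φ ‖q‖)).mul (hbd ⟪(σ : Vs d), ‖q‖⁻¹ • q⟫ t)).mul (hgd (v - (1 / 2 : ℝ) • q - (‖q‖ / 2) • (σ : Vs d)) t)).mul (hfd (v - (1 / 2 : ℝ) • q + (‖q‖ / 2) • (σ : Vs d)) t)
    refine h.congr_deriv ?_
    simp only [Pi.mul_apply]; ring
  have derM : ∀ (q : Vs d) (σ : sphere (0:Vs d) 1) (t : ℝ),
      HasDerivAt (fun u => Φ ‖q‖ * b ⟪(σ : Vs d), ‖q‖⁻¹ • q⟫ u * g (v - q) u)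
        (Φ ‖q‖ * bz ⟪(σ : Vs d), ‖q‖⁻¹ • q⟫ t * g (v - q) t + Φ ‖q‖ * b ⟪(σ : Vs d), ‖q‖⁻¹ • q⟫ t * gz (v - q) t) t := by
    intro q σ t
    have h := ((hasDerivAt_const t (Φ ‖q‖)).mul (hbd ⟪(σ : Vs d), ‖q‖⁻¹ • q⟫ t)).mul (hgd (v - q) t)
    refine h.congr_deriv ?_
    simp only [Pi.mul_apply]; ring
  -- derivative of the gain part
  have hPder : HasDerivAt
      (fun t => (∫ q in closedBall (0:Vs d) R, ∫ σ, Φ ‖q‖ * b ⟪(σ : Vs d), ‖q‖⁻¹ • q⟫ t * g (v - (1 / 2 : ℝ) • q - (‖q‖ / 2) • (σ : Vs d)) t * f (v - (1 / 2 : ℝ) • q + (‖q‖ / 2) • (σ : Vs d)) t ∂(sphMeas d)))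
      (∫ q in closedBall (0:Vs d) R, ∫ σ, Φ ‖q‖ * bz ⟪(σ : Vs d), ‖q‖⁻¹ • q⟫ z * g (v - (1 / 2 : ℝ) • q - (‖q‖ / 2) • (σ : Vs d)) z * f (v - (1 / 2 : ℝ) • q + (‖q‖ / 2) • (σ : Vs d)) z + Φ ‖q‖ * b ⟪(σ : Vs d), ‖q‖⁻¹ • q⟫ z * gz (v - (1 / 2 : ℝ) • q - (‖q‖ / 2) • (σ : Vs d)) z * f (v - (1 / 2 : ℝ) • q + (‖q‖ / 2) • (σ : Vs d)) z + Φ ‖q‖ * b ⟪(σ : Vs d), ‖q‖⁻¹ • q⟫ z * g (v - (1 / 2 : ℝ) • q - (‖q‖ / 2) • (σ : Vs d)) z * fz (v - (1 / 2 : ℝ) • q + (‖q‖ / 2) • (σ : Vs d)) z ∂(sphMeas d)) z :=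
    double_param_deriv R (fun q => Φ ‖q‖) MΦ (3 * (Cb * M * M)) hw0 hwae (by positivity)
      (fun q σ t => Φ ‖q‖ * b ⟪(σ : Vs d), ‖q‖⁻¹ • q⟫ t * g (v - (1 / 2 : ℝ) • q - (‖q‖ / 2) • (σ : Vs d)) t * f (v - (1 / 2 : ℝ) • q + (‖q‖ / 2) • (σ : Vs d)) t)
      (fun q σ t => Φ ‖q‖ * bz ⟪(σ : Vs d), ‖q‖⁻¹ • q⟫ t * g (v - (1 / 2 : ℝ) • q - (‖q‖ / 2) • (σ : Vs d)) t * f (v - (1 / 2 : ℝ) • q + (‖q‖ / 2) • (σ : Vs d)) t + Φ ‖q‖ * b ⟪(σ : Vs d), ‖q‖⁻¹ • q⟫ t * gz (v - (1 / 2 : ℝ) • q - (‖q‖ / 2) • (σ : Vs d)) t * f (v - (1 / 2 : ℝ) • q + (‖q‖ / 2) • (σ : Vs d)) t + Φ ‖q‖ * b ⟪(σ : Vs d), ‖q‖⁻¹ • q⟫ t * g (v - (1 / 2 : ℝ) • q - (‖q‖ / 2) • (σ : Vs d)) t * fz (v - (1 / 2 : ℝ) • q + (‖q‖ / 2) • (σ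 : Vs d)) t)
      (fun t => mP b g f hbc hgc hfc t)
      (fun t => ((mP bz g f hbzc hgc hfc t).add (mP b gz f hbc hgzc hfc t)).add
        (mP b g fz hbc hgc hfzc t))
      (fun q σ t => liftP q _ (bP b g f hb1 hgB hfB q σ t))
      (fun q σ t => by
        refine (abs_add_three _ _ _).trans ?_
        have h1 := bP bz g f hb2 hgB hfB q σ t
        have h2 := bP b gz f hb1 hgzB hfB q σ t
        have h3 := bP b g fz hb1 hgB hfzB q σ t
        nlinarith [h1, h2, h3])
      derP z
  -- derivative of the loss-part integral
  have hKder : HasDerivAt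
      (fun t => (∫ q in closedBall (0:Vs d) R, ∫ σ, Φ ‖q‖ * b ⟪(σ : Vs d), ‖q‖⁻¹ • q⟫ t * g (v - q) t ∂(sphMeas d)))
      (∫ q in closedBall (0:Vs d) R, ∫ σ, Φ ‖q‖ * bz ⟪(σ : Vs d), ‖q‖⁻¹ • q⟫ z * g (v - q) z + Φ ‖q‖ * b ⟪(σ : Vs d), ‖q‖⁻¹ • q⟫ z * gz (v - q) z ∂(sphMeas d)) z :=
    double_param_deriv R (fun q => Φ ‖q‖) MΦ (2 * (Cb * M)) hw0 hwae (by positivity)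
      (fun q σ t => Φ ‖q‖ * b ⟪(σ : Vs d), ‖q‖⁻¹ • q⟫ t * g (v - q) t)
      (fun q σ t => Φ ‖q‖ * bz ⟪(σ : Vs d), ‖q‖⁻¹ • q⟫ t * g (v - q) t + Φ ‖q‖ * b ⟪(σ : Vs d), ‖q‖⁻¹ • q⟫ t * gz (v - q) t)
      (fun t => mM b g hbc hgc t)
      (fun t => (mM bz g hbzc hgc t).add (mM b gz hbc hgzc t))
      (fun q σ t => liftM q _ (bM b g hb1 hgB q σ t))
      (fun q σ t => by
        refine (abs_add_le _ _).trans ?_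
        have h1 := bM bz g hb2 hgB q σ t
        have h2 := bM b gz hb1 hgzB q σ t
        nlinarith [h1, h2])
      derM z
  have hMder : HasDerivAt (fun t => f v t * (∫ q in closedBall (0:Vs d) R, ∫ σ, Φ ‖q‖ * b ⟪(σ : Vs d), ‖q‖⁻¹ • q⟫ t * g (v - q) t ∂(sphMeas d)))
      (fz v z * (∫ q in closedBall (0:Vs d) R, ∫ σ, Φ ‖q‖ * b ⟪(σ : Vs d), ‖q‖⁻¹ • q⟫ z * g (v - q) z ∂(sphMeas d)) +
        f v z * (∫ q in closedBall (0:Vs d) R, ∫ σ, Φ ‖q‖ * bz ⟪(σ : Vs d), ‖q‖⁻¹ • q⟫ z * g (v - q) z + Φ ‖q‖ * b ⟪(σ : Vs d), ‖q‖⁻¹ • q⟫ z * gz (v - q) z ∂(sphMeas d))) z :=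
    (hfd v z).mul hKder
  -- splitting the integrals of sums
  have hsplitP :
      (∫ q in closedBall (0:Vs d) R, ∫ σ, Φ ‖q‖ * bz ⟪(σ : Vs d), ‖q‖⁻¹ • q⟫ z * g (v - (1 / 2 : ℝ) • q - (‖q‖ / 2) • (σ : Vs d)) z * f (v - (1 / 2 : ℝ) • q + (‖q‖ / 2) • (σ : Vs d)) z + Φ ‖q‖ * b ⟪(σ : Vs d), ‖q‖⁻¹ • q⟫ z * gz (v - (1 / 2 : ℝ) • q - (‖q‖ / 2) • (σ : Vs d)) z * f (v - (1 / 2 : ℝ) • q + (‖q‖ / 2) • (σ : Vs d)) z + Φ ‖q‖ * b ⟪(σ : Vs d), ‖q‖⁻¹ • q⟫ z * g (v - (1 / 2 : ℝ) • q - (‖q‖ / 2) • (σ : Vs d)) z * fz (v - (1 / 2 : ℝ) • q + (‖q‖ / 2) • (σ : Vs d)) z ∂(sphMeas d))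
      = (∫ q in closedBall (0:Vs d) R, ∫ σ, Φ ‖q‖ * bz ⟪(σ : Vs d), ‖q‖⁻¹ • q⟫ z * g (v - (1 / 2 : ℝ) • q - (‖q‖ / 2) • (σ : Vs d)) z * f (v - (1 / 2 : ℝ) • q + (‖q‖ / 2) • (σ : Vs d)) z ∂(sphMeas d)) + (∫ q in closedBall (0:Vs d) R, ∫ σ, Φ ‖q‖ * b ⟪(σ : Vs d), ‖q‖⁻¹ • q⟫ z * gz (v - (1 / 2 : ℝ) • q - (‖q‖ / 2) • (σ : Vs d)) z * f (v - (1 / 2 : ℝ) • q + (‖q‖ / 2) • (σ : Vs d)) z ∂(sphMeas d)) + (∫ q in closedBall (0:Vs d) R, ∫ σ, Φ ‖q‖ * b ⟪(σ : Vs d), ‖q‖⁻¹ • q⟫ z * g (v - (1 / 2 : ℝ) • q - (‖q‖ / 2) • (σ : Vs d)) z * fz (v - (1 / 2 : ℝ) • q + (‖q‖ / 2) • (σ : Vs d)) z ∂(sphMeas d)) :=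
    double_split3 R (fun q => Φ ‖q‖) MΦ (Cb * M * M) (Cb * M * M) (Cb * M * M)
      hwae hCMM hCMM hCMM
      (fun q σ => Φ ‖q‖ * bz ⟪(σ : Vs d), ‖q‖⁻¹ • q⟫ z * g (v - (1 / 2 : ℝ) • q - (‖q‖ / 2) • (σ : Vs d)) z * f (v - (1 / 2 : ℝ) • q + (‖q‖ / 2) • (σ : Vs d)) z)
      (fun q σ => Φ ‖q‖ * b ⟪(σ : Vs d), ‖q‖⁻¹ • q⟫ z * gz (v - (1 / 2 : ℝ) • q - (‖q‖ / 2) • (σ : Vs d)) z * f (v - (1 / 2 : ℝ) • q + (‖q‖ / 2) • (σ : Vs d)) z)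
      (fun q σ => Φ ‖q‖ * b ⟪(σ : Vs d), ‖q‖⁻¹ • q⟫ z * g (v - (1 / 2 : ℝ) • q - (‖q‖ / 2) • (σ : Vs d)) z * fz (v - (1 / 2 : ℝ) • q + (‖q‖ / 2) • (σ : Vs d)) z)
      (mP bz g f hbzc hgc hfc z) (mP b gz f hbc hgzc hfc z) (mP b g fz hbc hgc hfzc z)
      (fun q σ => bP bz g f hb2 hgB hfB q σ z)
      (fun q σ => bP b gz f hb1 hgzB hfB q σ z)
      (fun q σ => bP b g fz hb1 hgB hfzB q σ z)
  have hsplitK :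
      (∫ q in closedBall (0:Vs d) R, ∫ σ, Φ ‖q‖ * bz ⟪(σ : Vs d), ‖q‖⁻¹ • q⟫ z * g (v - q) z + Φ ‖q‖ * b ⟪(σ : Vs d), ‖q‖⁻¹ • q⟫ z * gz (v - q) z ∂(sphMeas d))
      = (∫ q in closedBall (0:Vs d) R, ∫ σ, Φ ‖q‖ * bz ⟪(σ : Vs d), ‖q‖⁻¹ • q⟫ z * g (v - q) z ∂(sphMeas d)) + (∫ q in closedBall (0:Vs d) R, ∫ σ, Φ ‖q‖ * b ⟪(σ : Vs d), ‖q‖⁻¹ • q⟫ z * gz (v - q) z ∂(sphMeas d)) :=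
    double_split2 R (fun q => Φ ‖q‖) MΦ (Cb * M) (Cb * M) hwae hCM hCM
      (fun q σ => Φ ‖q‖ * bz ⟪(σ : Vs d), ‖q‖⁻¹ • q⟫ z * g (v - q) z)
      (fun q σ => Φ ‖q‖ * b ⟪(σ : Vs d), ‖q‖⁻¹ • q⟫ z * gz (v - q) z)
      (mM bz g hbzc hgc z) (mM b gz hbc hgzc z)
      (fun q σ => bM bz g hb2 hgB q σ z)
      (fun q σ => bM b gz hb1 hgzB q σ z)
  have htot := hPder.sub hMder
  refine htot.congr_deriv ?_
  rw [hsplitP, hsplitK]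
  ring
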